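/- Let k ≥ 2, N ≥ 2k - 1, and τ(0) = # 0^{N-k} 0^{k-1}, τ(1) = # 0^{k-2} 1^{N-2k+2} 0^{k-1}. If a k-abelian power u_0 ... u_{e-1} with e ≥ N occurs in τ(w) for an infinite binary word w, then N divides |u_0|. -/

import Mathlib

/-- Abelian equivalence of words: each letter occurs equally often. -/
def AbEq {A : Type*} [DecidableEq A] (u v : List A) : Prop :=
  ∀ a : A, u.count a = v.count a

/-- `u` occurs as a (contiguous) factor of the infinite word `x`. -/
def OccursIn {A : Type*} (x : ℕ → A) (u : List A) : Prop :=
  ∃ i, u = (List.range u.length).map fun j => x (i + j)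

/-- The number of (possibly overlapping) occurrences of `z` as a factor of `u`. -/
def FactorCount {A : Type*} [DecidableEq A] (u z : List A) : ℕ :=
  (List.range (u.length + 1 - z.length)).countP fun i =>
    decide ((u.drop i).take z.length = z)

/-- `k`-abelian equivalence: every nonempty word of length at most `k` occurs
equally often as a factor of `u` and of `v`. -/
def KAbEq {A : Type*} [DecidableEq A] (k : ℕ) (u v : List A) : Prop :=
  ∀ z : List A, z ≠ [] → z.length ≤ k → FactorCount u z = FactorCount v z

/-- A `k`-abelian power of exponent `e` and period `m` occurs in `x`. -/
def IsKAbPow {A : Type*} [DecidableEq A] (x : ℕ → A) (k e m : ℕ) : Prop :=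
  0 < e ∧ 0 < m ∧ ∃ u : ℕ → List A,
    (∀ i < e, (u i).length = m) ∧
    (∀ i < e, KAbEq k (u i) (u 0)) ∧
    OccursIn x (((List.range e).map u).flatten)

/-- The `N`-uniform substitution `τ(0) = # 0^{N-k} 0^{k-1}`,
`τ(1) = # 0^{k-2} 1^{N-2k+2} 0^{k-1}`, with `# = 2` in `Fin 3`. -/
def tauLetter (k N : ℕ) (a : Fin 2) : List (Fin 3) :=
  if a = 0 then
    (2 : Fin 3) :: (List.replicate (N - k) 0 ++ List.replicate (k - 1) 0)
  else
    (2 : Fin 3) :: (List.replicate (k - 2) 0 ++ List.replicate (N + 2 - 2 * k) 1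
      ++ List.replicate (k - 1) 0)

/-- `τ(w)`, applying `τ` letterwise to the infinite binary word `w`. -/
def tauWord (k N : ℕ) (w : ℕ → Fin 2) (n : ℕ) : Fin 3 :=
  (tauLetter k N (w (n / N))).getD (n % N) 0

lemma factorCount_singleton {A : Type*} [DecidableEq A] (a : A) (v : List A) :
    FactorCount v [a] = v.count a := by
  induction v with
  | nil => rfl
  | cons b v ih =>
    have h1 : FactorCount (b :: v) [a]
        = (List.range (v.length + 1)).countP fun i =>
            decide ((((b :: v).drop i).take 1) = [a]) := by
      simp [FactorCount]
    rw [h1, List.range_succ_eq_map, List.countP_cons, List.countP_map]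
    have h2 : (List.countP ((fun i => decide (List.take 1 (List.drop i (b :: v)) = [a])) ∘ Nat.succ) (List.range v.length)) = FactorCount v [a] := by
      apply List.countP_congr
      intro x hx
      simp [FactorCount, Function.comp]
    rw [h2, ih, List.count_cons]
    by_cases hba : b = a
    · subst hba; simp
    · simp [hba, Ne.symm hba]

lemma flatten_slice {A : Type*} (L : List (List A)) (m : ℕ) :
    ∀ j (hj : j < L.length), (∀ l ∈ L, l.length = m) →
      (L.flatten.drop (j * m)).take m = L.get ⟨j, hj⟩ := by
  induction L with
  | nil => intro j hj; simp at hj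
  | cons l L ih =>
    intro j hj hlen
    have hl : l.length = m := hlen l (by simp)
    cases j with
    | zero =>
      simp only [Nat.zero_mul, List.drop_zero, List.flatten_cons]
      rw [← hl, List.take_left]
      rfl
    | succ j =>
      have : (j + 1) * m = l.length + j * m := by rw [hl]; ring
      rw [List.flatten_cons, this, ← List.drop_drop, List.drop_left]
      exact ih j (by simpa using hj) (fun x hx => hlen x (by simp [hx]))

lemma getD_ne_two (rest : List (Fin 3)) (hrest : ∀ x ∈ rest, x ≠ 2) (ρ : ℕ) :
    rest.getD ρ 0 ≠ 2 := by
  rcases lt_or_ge ρ rest.length with h | h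
  · rw [List.getD_eq_getElem _ _ h]
    exact hrest _ (List.getElem_mem h)
  · rw [List.getD_eq_default _ _ h]; decide

lemma tau_eq_two_iff (k N : ℕ) (w : ℕ → Fin 2) (s : ℕ) :
    (tauWord k N w s = 2) ↔ N ∣ s := by
  rw [Nat.dvd_iff_mod_eq_zero]
  unfold tauWord tauLetter
  split
  · cases hρ : s % N with
    | zero => simp
    | succ ρ =>
      simp only [List.getD_cons_succ]
      constructor
      · intro hcon
        exact absurd hcon (getD_ne_two _ (by intro x hx; simp [List.mem_replicate] at hx; simp [hx]) ρ)
      · intro hc; omega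
  · cases hρ : s % N with
    | zero => simp
    | succ ρ =>
      simp only [List.getD_cons_succ]
      constructor
      · intro hcon
        refine absurd hcon (getD_ne_two _ ?_ ρ)
        intro x hx
        simp [List.mem_replicate] at hx
        rcases hx with ⟨-, rfl⟩ | ⟨-, rfl⟩ | ⟨-, rfl⟩ <;> decide
      · intro hc; omega

lemma countP_range_dvd (N : ℕ) (hN : 0 < N) (M : ℕ) :
    (List.range M).countP (fun t => decide (N ∣ t)) = (M + N - 1) / N := by
  induction M with
  | zero => simp [Nat.div_eq_of_lt (by omega : N - 1 < N)]
  | succ M ih =>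
    rw [List.range_succ, List.countP_append, ih]
    have h1 : M + 1 + N - 1 = (M + N - 1) + 1 := by omega
    rw [h1, Nat.succ_div]
    have h2 : (N ∣ M + N - 1 + 1) ↔ N ∣ M := by
      have : M + N - 1 + 1 = M + N := by omega
      rw [this]
      exact ⟨fun h => (Nat.dvd_add_right (Dvd.intro 1 (by ring))).mp (by rwa [Nat.add_comm]),
        fun h => Dvd.dvd.add h (dvd_refl N)⟩
    simp only [List.countP_cons, List.countP_nil, Nat.zero_add, h2]
    by_cases h : N ∣ M <;> simp [h]

lemma countP_range_add (P : ℕ → Bool) (s m : ℕ) :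
    (List.range (s + m)).countP P
      = (List.range s).countP P + (List.range m).countP (fun t => P (s + t)) := by
  rw [List.range_add, List.countP_append, List.countP_map]
  rfl

lemma block_eq {A : Type*} (g : ℕ → A) (e m j : ℕ) (hj : j < e) :
    ((((List.range (e * m)).map g).drop (j * m)).take m)
      = (List.range m).map (fun t => g (j * m + t)) := by
  have hle : j * m + m ≤ e * m := by
    have h1 : (j + 1) * m ≤ e * m := Nat.mul_le_mul_right m hj
    have h2 : (j + 1) * m = j * m + m := by ring
    omega
  have hsplit : e * m = j * m + (e * m - j * m) := by omega
  have h2 : (List.range (e * m)).drop (j * m)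
      = (List.range (e * m - j * m)).map (fun t => j * m + t) := by
    conv_lhs => rw [hsplit, List.range_add]
    have := List.drop_left (l₁ := List.range (j * m))
      (l₂ := (List.range (e * m - j * m)).map (fun t => j * m + t))
    simpa using this
  have hmin : m ⊓ (e * m - j * m) = m := by omega
  rw [← List.map_drop, h2, List.map_map, ← List.map_take, List.take_range, hmin]
  rfl

lemma Hbound (N : ℕ) (hN : 0 < N) (M : ℕ) :
    M ≤ N * ((M + N - 1) / N) ∧ N * ((M + N - 1) / N) ≤ M + N - 1 := by
  have h1 := Nat.div_add_mod (M + N - 1) N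
  have h2 : (M + N - 1) % N < N := Nat.mod_lt _ hN
  set q := (M + N - 1) / N
  set r := (M + N - 1) % N
  generalize hP : N * q = P at h1 ⊢
  omega

/-- If a `k`-abelian power of exponent `e ≥ N` and period `m` occurs in `τ(w)`,
then `N` divides `m`. -/
theorem period_divisible_of_kAbelian_power_in_tau
    (k N : ℕ) (hk : 2 ≤ k) (hN : 2 * k - 1 ≤ N)
    (w : ℕ → Fin 2) (e m : ℕ) (he : N ≤ e)
    (h : IsKAbPow (tauWord k N w) k e m) :
    N ∣ m := by
  obtain ⟨he0, hm0, u, hlen, hab, i, hocc⟩ := h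
  have hN0 : 0 < N := by omega
  set x := tauWord k N w with hx
  set L := (List.range e).map u with hL
  have hmem : ∀ l ∈ L, l.length = m := by
    intro l hl
    rw [hL, List.mem_map] at hl
    obtain ⟨j, hj, rfl⟩ := hl
    exact hlen j (List.mem_range.mp hj)
  have hFlen : L.flatten.length = e * m := by
    rw [List.length_flatten]
    have hrep : L.map List.length = List.replicate (L.map List.length).length m :=
      List.eq_replicate_of_mem (fun b hb => by
        rw [List.mem_map] at hb
        obtain ⟨l, hl, rfl⟩ := hb
        exact hmem l hl)
    rw [hrep, List.sum_replicate, smul_eq_mul]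
    simp [hL]
  rw [hFlen] at hocc
  -- each block explicitly
  have hblock : ∀ j, j < e →
      u j = (List.range m).map (fun t => x (i + (j * m + t))) := by
    intro j hj
    have hget : L.get ⟨j, by simp [hL]; omega⟩ = u j := by simp [hL]
    have h1 : (L.flatten.drop (j * m)).take m = u j := by
      rw [flatten_slice L m j (by simp [hL]; omega) hmem, hget]
    rw [hocc, block_eq _ e m j hj] at h1
    exact h1.symm
  -- counts of the marker
  have hcount : ∀ j, j < e →
      (u j).count 2 = (List.range m).countP (fun t => decide (N ∣ (i + j * m) + t)) := by
    intro j hj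
    rw [hblock j hj, List.count_eq_countP, List.countP_map]
    apply List.countP_congr
    intro t ht
    simp only [Function.comp_apply, beq_iff_eq, decide_eq_true_eq]
    rw [hx, tau_eq_two_iff, Nat.add_assoc]
  set c : ℕ → ℕ := fun j => (List.range m).countP (fun t => decide (N ∣ (i + j * m) + t)) with hc
  have hceq : ∀ j, j < e → c j = c 0 := by
    intro j hj
    have h1 := hab j hj [2] (by simp) (by simp; omega)
    rw [factorCount_singleton, factorCount_singleton, hcount j hj, hcount 0 he0] at h1
    simpa [hc] using h1
  -- H function
  set H : ℕ → ℕ := fun M => (M + N - 1) / N with hH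
  have hstep : ∀ j, H ((i + j * m) + m) = H (i + j * m) + c j := by
    intro j
    have h1 := countP_range_add (fun t => decide (N ∣ t)) (i + j * m) m
    rw [countP_range_dvd N hN0, countP_range_dvd N hN0] at h1
    simp only [hH, hc]
    omega
  have hind : ∀ j, j ≤ e → H (i + j * m) = H i + j * c 0 := by
    intro j
    induction j with
    | zero => intro _; simp
    | succ j ih =>
      intro hje
      have hj : j < e := by omega
      have h1 : i + (j + 1) * m = (i + j * m) + m := by ring
      rw [h1, hstep j, ih (by omega), hceq j hj]
      ring
  -- final arithmetic
  have hfin := hind e (le_refl e)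
  obtain ⟨hb1, hb2⟩ := Hbound N hN0 (i + e * m)
  obtain ⟨hb3, hb4⟩ := Hbound N hN0 i
  rw [show ((i + e * m + N - 1) / N) = H (i + e * m) from rfl, hfin] at hb1 hb2
  rw [show ((i + N - 1) / N) = H i from rfl] at hb3 hb4
  have hexp : N * (H i + e * c 0) = N * H i + e * (N * c 0) := by ring
  rw [hexp] at hb1 hb2
  rcases lt_trichotomy (N * c 0) m with hlt | heq | hgt
  · exfalso
    have h1 : e * (N * c 0 + 1) ≤ e * m := Nat.mul_le_mul_left e (by omega)
    have h2 : e * (N * c 0 + 1) = e * (N * c 0) + e := by ring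
    generalize hA : N * H i = A at hb1 hb2 hb3 hb4
    generalize hB : e * (N * c 0) = B at hb1 hb2 h2
    generalize hE : e * m = E at hb1 hb2 h1
    omega
  · exact ⟨c 0, heq.symm⟩
  · exfalso
    have h1 : e * (m + 1) ≤ e * (N * c 0) := Nat.mul_le_mul_left e (by omega)
    have h2 : e * (m + 1) = e * m + e := by ring
    generalize hA : N * H i = A at hb1 hb2 hb3 hb4
    generalize hB : e * (N * c 0) = B at hb1 hb2 h1
    generalize hE : e * m = E at hb1 hb2 h2
    omega
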